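/- Let 𝒮 ⊆ 𝒯 be a family of measurable sets such that for every A ∈ 𝒮, E(Cov_n(1_A,1_A|I)) → 0 as n → ∞. Then for every A in the Dynkin system generated by 𝒮, E(Cov_n(1_A,1_A|I)) → 0 as n → ∞. -/

import Mathlib

open MeasureTheory Filter Topology

noncomputable section

/-- The σ-algebra of invariant measurable sets of `T`. -/
def invSigma {Ω : Type*} [MeasurableSpace Ω] (T : Ω → Ω) : MeasurableSpace Ω where
  MeasurableSet' A := MeasurableSet A ∧ T ⁻¹' A = A
  measurableSet_empty := ⟨MeasurableSet.empty, by simp⟩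
  measurableSet_compl := fun A hA => ⟨hA.1.compl, by rw [Set.preimage_compl, hA.2]⟩
  measurableSet_iUnion := fun f hf =>
    ⟨MeasurableSet.iUnion fun i => (hf i).1, by
      rw [Set.preimage_iUnion]
      exact Set.iUnion_congr fun i => (hf i).2⟩

/-- `E(Cov_n(f,g|I)) = ∫ conj(f)·(g∘T^n) dμ − ∫ conj(E(f|I))·E(g|I) dμ`. -/
def expCovInv {Ω : Type*} [MeasurableSpace Ω] (μ : Measure Ω) (T : Ω → Ω)
    (f g : Ω → ℂ) (n : ℕ) : ℂ :=
  (∫ x, (starRingEnd ℂ) (f x) * g (T^[n] x) ∂μ) -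
    ∫ x, (starRingEnd ℂ) ((μ[f | invSigma T]) x) * (μ[g | invSigma T]) x ∂μ

/-- The Dynkin system generated by a family `S` of sets: the smallest family containing `S`
which contains the whole space, is stable under relative complements `B \ A` for `A ⊆ B`
both in the family, and is stable under countable increasing unions. -/
inductive DynkinGen {Ω : Type*} (S : Set (Set Ω)) : Set Ω → Prop
  | basic : ∀ A ∈ S, DynkinGen S A
  | univ : DynkinGen S Set.univ
  | diff : ∀ A B : Set Ω, DynkinGen S A → DynkinGen S B → A ⊆ B → DynkinGen S (B \ A)
  | iUnion_mono : ∀ f : ℕ → Set Ω, (∀ n, f n ⊆ f (n + 1)) → (∀ n, DynkinGen S (f n)) →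
      DynkinGen S (⋃ n, f n)

/-! ### Auxiliary Hilbert-space lemmas -/

set_option linter.unusedSectionVars false

section Hilbert
variable {H : Type*} [NormedAddCommGroup H] [InnerProductSpace ℂ H] [CompleteSpace H]

local notation "⟪" x ", " y "⟫" => @inner ℂ _ _ x y

lemma myIter_map_sub (U : H →ₗᵢ[ℂ] H) (n : ℕ) (a b : H) :
    (⇑U)^[n] (a - b) = (⇑U)^[n] a - (⇑U)^[n] b := by
  induction n with
  | zero => simp
  | succ n ih => simp [Function.iterate_succ_apply', ih, map_sub]

lemma myIter_inner (U : H →ₗᵢ[ℂ] H) (n : ℕ) (a b : H) :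
    ⟪(⇑U)^[n] a, (⇑U)^[n] b⟫ = ⟪a, b⟫ := by
  induction n with
  | zero => simp
  | succ n ih => simp [Function.iterate_succ_apply', LinearIsometry.inner_map_map, ih]

lemma myIter_norm (U : H →ₗᵢ[ℂ] H) (n : ℕ) (a : H) : ‖(⇑U)^[n] a‖ = ‖a‖ := by
  induction n with
  | zero => rfl
  | succ n ih => rw [Function.iterate_succ_apply', U.norm_map, ih]

/-- If `⟪f, Uⁿ f⟫ → 0` for a linear isometry `U`, then `⟪g, Uⁿ f⟫ → 0` for every `g`. -/
lemma cross_tendsto (U : H →ₗᵢ[ℂ] H) (f : H)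
    (hf : Tendsto (fun n : ℕ => ⟪f, (⇑U)^[n] f⟫) atTop (𝓝 0)) (g : H) :
    Tendsto (fun n : ℕ => ⟪g, (⇑U)^[n] f⟫) atTop (𝓝 0) := by
  set Z : Submodule ℂ H :=
    (Submodule.span ℂ (Set.range fun k : ℕ => (⇑U)^[k] f)).topologicalClosure with hZ
  haveI : CompleteSpace Z := (Submodule.isClosed_topologicalClosure _).completeSpace_coe
  have hspan : ∀ p ∈ Submodule.span ℂ (Set.range fun k : ℕ => (⇑U)^[k] f),
      Tendsto (fun n : ℕ => ⟪p, (⇑U)^[n] f⟫) atTop (𝓝 0) := by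
    intro p hp
    induction hp using Submodule.span_induction with
    | mem x hx =>
      obtain ⟨k, rfl⟩ := hx
      have h1 : Tendsto (fun n : ℕ => ⟪f, (⇑U)^[n - k] f⟫) atTop (𝓝 0) :=
        hf.comp (tendsto_sub_atTop_nat k)
      refine h1.congr' ?_
      filter_upwards [eventually_ge_atTop k] with n hn
      have : (⇑U)^[n] f = (⇑U)^[k] ((⇑U)^[n - k] f) := by
        rw [← Function.iterate_add_apply]
        congr 1
        omega
      rw [this, ← myIter_inner U k f ((⇑U)^[n-k] f)]
    | zero => simpa using tendsto_const_nhds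
    | add x y hx hy ihx ihy =>
      simpa using (ihx.add ihy)
    | smul c x hx ihx =>
      have := ihx.mul_const (starRingEnd ℂ c)
      simpa using this
  obtain ⟨y, hy, z, hz, rfl⟩ := Z.exists_add_mem_mem_orthogonal g
  have hzero : ∀ n : ℕ, ⟪z, (⇑U)^[n] f⟫ = 0 := by
    intro n
    refine (Submodule.mem_orthogonal' Z z).1 hz _ ?_
    exact Submodule.le_topologicalClosure _ (Submodule.subset_span ⟨n, rfl⟩)
  have hy' : Tendsto (fun n : ℕ => ⟪y, (⇑U)^[n] f⟫) atTop (𝓝 0) := by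
    rw [NormedAddCommGroup.tendsto_nhds_zero]
    intro ε hε
    have hd : (0:ℝ) < ε / 2 / (‖f‖ + 1) := by positivity
    have hyZ : y ∈ closure ((Submodule.span ℂ (Set.range fun k : ℕ => (⇑U)^[k] f)) : Set H) := by
      rw [hZ] at hy
      exact hy
    obtain ⟨p, hpmem, hpd⟩ := Metric.mem_closure_iff.1 hyZ _ hd
    have h2 := NormedAddCommGroup.tendsto_nhds_zero.1 (hspan p hpmem) (ε / 2) (by positivity)
    filter_upwards [h2] with n hn
    have hb : ‖⟪y - p, (⇑U)^[n] f⟫‖ ≤ ‖y - p‖ * ‖f‖ := by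
      calc ‖⟪y - p, (⇑U)^[n] f⟫‖ ≤ ‖y - p‖ * ‖(⇑U)^[n] f‖ := norm_inner_le_norm _ _
      _ = ‖y - p‖ * ‖f‖ := by rw [myIter_norm]
    have hdist : ‖y - p‖ * ‖f‖ < ε / 2 := by
      have h3 : ‖y - p‖ < ε / 2 / (‖f‖ + 1) := by rwa [← dist_eq_norm]
      calc ‖y - p‖ * ‖f‖ ≤ ‖y - p‖ * (‖f‖ + 1) := by nlinarith [norm_nonneg (y - p), norm_nonneg f]
      _ < ε / 2 / (‖f‖ + 1) * (‖f‖ + 1) := by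
          apply mul_lt_mul_of_pos_right h3; positivity
      _ = ε / 2 := by field_simp
    calc ‖⟪y, (⇑U)^[n] f⟫‖ = ‖⟪p, (⇑U)^[n] f⟫ + ⟪y - p, (⇑U)^[n] f⟫‖ := by
          rw [← inner_add_left]; congr 2; abel
      _ ≤ ‖⟪p, (⇑U)^[n] f⟫‖ + ‖⟪y - p, (⇑U)^[n] f⟫‖ := norm_add_le _ _
      _ < ε / 2 + ε / 2 := add_lt_add_of_lt_of_le hn (le_of_lt (lt_of_le_of_lt hb hdist))
      _ = ε := by ring
  have heq : (fun n : ℕ => ⟪y + z, (⇑U)^[n] f⟫) = fun n => ⟪y, (⇑U)^[n] f⟫ := by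
    funext n
    rw [inner_add_left, hzero, add_zero]
  rw [heq]
  exact hy'

end Hilbert

/-! ### Measure-theoretic layer -/

section MT

variable {Ω : Type*} [MeasurableSpace Ω] {μ : Measure Ω} [IsProbabilityMeasure μ] {T : Ω → Ω}

local notation "⟪" x ", " y "⟫" => @inner ℂ _ _ x y

lemma invSigma_le : invSigma T ≤ ‹MeasurableSpace Ω› := fun _ hs => hs.1

lemma invSigma_comp_eq {h : Ω → ℂ} (hh : StronglyMeasurable[invSigma T] h) (x : Ω) :
    h (T x) = h x := by
  have hm : Measurable[invSigma T] h := hh.measurable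
  have h1 : T ⁻¹' (h ⁻¹' {h x}) = h ⁻¹' {h x} :=
    (hm (measurableSet_singleton (h x))).2
  have h2 : x ∈ T ⁻¹' (h ⁻¹' {h x}) := by
    rw [h1]; exact rfl
  exact h2

lemma invSigma_comp_iterate_eq {h : Ω → ℂ} (hh : StronglyMeasurable[invSigma T] h) (n : ℕ)
    (x : Ω) : h (T^[n] x) = h x := by
  induction n with
  | zero => rfl
  | succ n ih => rw [Function.iterate_succ_apply', invSigma_comp_eq hh, ih]

variable (hT : MeasurePreserving T μ μ)

/-- The Koopman operator on `L²`. -/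
abbrev UU (hT : MeasurePreserving T μ μ) : Lp ℂ 2 μ →ₗᵢ[ℂ] Lp ℂ 2 μ :=
  Lp.compMeasurePreservingₗᵢ ℂ T hT

lemma coeFn_UU (F : Lp ℂ 2 μ) : ⇑(UU hT F) =ᵐ[μ] ⇑F ∘ T :=
  Lp.coeFn_compMeasurePreserving F hT

lemma coeFn_UU_iter (F : Lp ℂ 2 μ) (n : ℕ) :
    ⇑((⇑(UU hT))^[n] F) =ᵐ[μ] fun x => F (T^[n] x) := by
  induction n with
  | zero => exact Filter.EventuallyEq.rfl
  | succ n ih =>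
    rw [Function.iterate_succ_apply']
    have h1 : ⇑(UU hT ((⇑(UU hT))^[n] F)) =ᵐ[μ] ⇑((⇑(UU hT))^[n] F) ∘ T := coeFn_UU hT _
    have h2 : (⇑((⇑(UU hT))^[n] F)) ∘ T =ᵐ[μ] (fun x => F (T^[n] x)) ∘ T :=
      hT.quasiMeasurePreserving.ae_eq ih
    refine h1.trans (h2.trans (Filter.EventuallyEq.of_eq ?_))
    funext x
    simp [Function.comp, Function.iterate_succ_apply]

lemma UU_fix {F : Lp ℂ 2 μ} (hF : AEStronglyMeasurable[invSigma T] (⇑F) μ) : UU hT F = F := by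
  obtain ⟨h, hmeas, hae⟩ := hF
  refine Lp.ext ?_
  have h1 : ⇑(UU hT F) =ᵐ[μ] ⇑F ∘ T := coeFn_UU hT F
  have h2 : ⇑F ∘ T =ᵐ[μ] h ∘ T := hT.quasiMeasurePreserving.ae_eq hae
  have h3 : h ∘ T = h := funext fun x => invSigma_comp_eq hmeas x
  refine h1.trans (h2.trans ?_)
  rw [h3]
  exact hae.symm

lemma UU_iter_fix {F : Lp ℂ 2 μ} (hF : AEStronglyMeasurable[invSigma T] (⇑F) μ) (n : ℕ) :
    (⇑(UU hT))^[n] F = F := by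
  induction n with
  | zero => rfl
  | succ n ih => rw [Function.iterate_succ_apply', ih, UU_fix hT hF]

lemma condexpL2_of_mem {F : Lp ℂ 2 μ} (hF : F ∈ lpMeas ℂ ℂ (invSigma T) 2 μ) :
    ((condExpL2 ℂ ℂ (invSigma_le (T := T)) F : lpMeas ℂ ℂ (invSigma T) 2 μ) : Lp ℂ 2 μ) = F := by
  rw [condExpL2]
  haveI : Fact (invSigma T ≤ ‹MeasurableSpace Ω›) := ⟨invSigma_le⟩
  have h := Submodule.orthogonalProjectionOnto_mem_subspace_eq_self
    (⟨F, hF⟩ : lpMeas ℂ ℂ (invSigma T) 2 μ)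
  rw [h]

lemma condexpL2_UU_iter (F : Lp ℂ 2 μ) (n : ℕ) :
    condExpL2 ℂ ℂ (invSigma_le (T := T)) ((⇑(UU hT))^[n] F)
      = condExpL2 ℂ ℂ (invSigma_le (T := T)) F := by
  have hmem : (⇑(UU hT))^[n] F - F ∈ (lpMeas ℂ ℂ (invSigma T) 2 μ)ᗮ := by
    rw [Submodule.mem_orthogonal]
    intro u hu
    have hufix : (⇑(UU hT))^[n] u = u :=
      UU_iter_fix hT (mem_lpMeas_iff_aestronglyMeasurable.1 hu) n
    rw [inner_sub_right]
    have : ⟪u, (⇑(UU hT))^[n] F⟫ = ⟪u, F⟫ := by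
      conv_lhs => rw [← hufix]
      exact myIter_inner (UU hT) n u F
    rw [this, sub_self]
  have hsub : condExpL2 ℂ ℂ (invSigma_le (T := T)) ((⇑(UU hT))^[n] F - F) = 0 := by
    rw [condExpL2]
    haveI : Fact (invSigma T ≤ ‹MeasurableSpace Ω›) := ⟨invSigma_le⟩
    exact Submodule.orthogonalProjectionOnto_apply_of_mem_orthogonal hmem
  have := map_sub (condExpL2 ℂ ℂ (invSigma_le (T := T))) ((⇑(UU hT))^[n] F) F
  rw [hsub] at this
  exact sub_eq_zero.1 this.symm

lemma key_identity (F G : Lp ℂ 2 μ) (n : ℕ) :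
    ⟪F, (⇑(UU hT))^[n] G⟫
        - ⟪((condExpL2 ℂ ℂ (invSigma_le (T := T)) F : lpMeas ℂ ℂ (invSigma T) 2 μ) : Lp ℂ 2 μ),
          ((condExpL2 ℂ ℂ (invSigma_le (T := T)) G : lpMeas ℂ ℂ (invSigma T) 2 μ) : Lp ℂ 2 μ)⟫
      = ⟪F - ((condExpL2 ℂ ℂ (invSigma_le (T := T)) F : lpMeas ℂ ℂ (invSigma T) 2 μ) : Lp ℂ 2 μ),
          (⇑(UU hT))^[n]
            (G - ((condExpL2 ℂ ℂ (invSigma_le (T := T)) G :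
              lpMeas ℂ ℂ (invSigma T) 2 μ) : Lp ℂ 2 μ))⟫ := by
  set PF : Lp ℂ 2 μ :=
    ((condExpL2 ℂ ℂ (invSigma_le (T := T)) F : lpMeas ℂ ℂ (invSigma T) 2 μ) : Lp ℂ 2 μ) with hPF
  set PG : Lp ℂ 2 μ :=
    ((condExpL2 ℂ ℂ (invSigma_le (T := T)) G : lpMeas ℂ ℂ (invSigma T) 2 μ) : Lp ℂ 2 μ) with hPG
  have hPGmem : PG ∈ lpMeas ℂ ℂ (invSigma T) 2 μ :=
    (condExpL2 ℂ ℂ (invSigma_le (T := T)) G).2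
  have hPGfix : (⇑(UU hT))^[n] PG = PG :=
    UU_iter_fix hT (mem_lpMeas_iff_aestronglyMeasurable.1 hPGmem) n
  have e1 : ⟪F, PG⟫ = ⟪PF, PG⟫ := by
    have h := inner_condExpL2_left_eq_right (𝕜 := ℂ) (invSigma_le (T := T)) (f := F) (g := PG)
    rw [← hPF] at h
    have h2 : ((condExpL2 ℂ ℂ (invSigma_le (T := T)) PG :
        lpMeas ℂ ℂ (invSigma T) 2 μ) : Lp ℂ 2 μ) = PG := condexpL2_of_mem hPGmem
    rw [h2] at h
    exact h.symm
  have e2 : ⟪PF, (⇑(UU hT))^[n] G⟫ = ⟪PF, PG⟫ := by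
    have h := inner_condExpL2_left_eq_right (𝕜 := ℂ) (invSigma_le (T := T)) (f := F)
      (g := (⇑(UU hT))^[n] G)
    rw [condexpL2_UU_iter hT G n, ← hPF, ← hPG] at h
    rw [h, e1]
  rw [myIter_map_sub, hPGfix, inner_sub_left, inner_sub_right, inner_sub_right, e1, e2]
  ring


/-- The centered indicator-like element: `F - E(F | invSigma T)` in `L²`. -/
def ctr (T : Ω → Ω) (F : Lp ℂ 2 μ) : Lp ℂ 2 μ :=
  F - ((condExpL2 ℂ ℂ (invSigma_le (T := T)) F : lpMeas ℂ ℂ (invSigma T) 2 μ) : Lp ℂ 2 μ)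

lemma ctr_sub (F G : Lp ℂ 2 μ) : ctr T (F - G) = ctr T F - ctr T G := by
  simp only [ctr, map_sub, Submodule.coe_sub]
  abel

lemma norm_ctr_le (F : Lp ℂ 2 μ) : ‖ctr (μ := μ) T F‖ ≤ 2 * ‖F‖ := by
  have h1 : ‖((condExpL2 ℂ ℂ (invSigma_le (T := T)) F :
      lpMeas ℂ ℂ (invSigma T) 2 μ) : Lp ℂ 2 μ)‖ ≤ ‖F‖ :=
    norm_condExpL2_coe_le (invSigma_le (T := T)) F
  calc ‖ctr (μ := μ) T F‖ ≤ ‖F‖ + ‖((condExpL2 ℂ ℂ (invSigma_le (T := T)) F :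
        lpMeas ℂ ℂ (invSigma T) 2 μ) : Lp ℂ 2 μ)‖ := norm_sub_le _ _
  _ ≤ 2 * ‖F‖ := by linarith

/-- The key property: the covariance sequence of `F` tends to `0`. -/
def QProp (hT : MeasurePreserving T μ μ) (F : Lp ℂ 2 μ) : Prop :=
  Tendsto (fun n : ℕ => ⟪ctr T F, (⇑(UU hT))^[n] (ctr T F)⟫) atTop (𝓝 0)

lemma QProp_sub {F G : Lp ℂ 2 μ} (hF : QProp hT F) (hG : QProp hT G) : QProp hT (F - G) := by
  have c1 := cross_tendsto (UU hT) (ctr T F) hF (ctr T G)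
  have c2 := cross_tendsto (UU hT) (ctr T G) hG (ctr T F)
  have hcomb : Tendsto (fun n : ℕ =>
      (⟪ctr T F, (⇑(UU hT))^[n] (ctr T F)⟫ - ⟪ctr T F, (⇑(UU hT))^[n] (ctr T G)⟫)
        - (⟪ctr T G, (⇑(UU hT))^[n] (ctr T F)⟫ - ⟪ctr T G, (⇑(UU hT))^[n] (ctr T G)⟫))
      atTop (𝓝 0) := by
    simpa using (hF.sub c2).sub (c1.sub hG)
  rw [QProp, ctr_sub]
  refine hcomb.congr fun n => ?_
  rw [myIter_map_sub, inner_sub_left, inner_sub_right, inner_sub_right]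

lemma QProp_lim {Fk : ℕ → Lp ℂ 2 μ} {F : Lp ℂ 2 μ} (hconv : Tendsto Fk atTop (𝓝 F))
    (hk : ∀ k, QProp hT (Fk k)) : QProp hT F := by
  rw [QProp, NormedAddCommGroup.tendsto_nhds_zero]
  intro ε hε
  set M : ℝ := ‖ctr (μ := μ) T F‖ with hM
  have hMnn : 0 ≤ M := norm_nonneg _
  set δ : ℝ := min 1 (ε / (2 * (2 * M + 1))) with hδ
  have hδpos : 0 < δ := by
    apply lt_min one_pos
    positivity
  obtain ⟨k, hkd⟩ : ∃ k, ‖F - Fk k‖ < δ / 2 := by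
    have := (tendsto_iff_norm_sub_tendsto_zero.1 hconv)
    have h2 := (NormedAddCommGroup.tendsto_nhds_zero.1 this) (δ / 2) (by positivity)
    rcases h2.exists with ⟨k, hk2⟩
    exact ⟨k, by rwa [norm_sub_rev, Real.norm_of_nonneg (norm_nonneg _)] at hk2⟩
  have hd : ‖ctr (μ := μ) T F - ctr T (Fk k)‖ < δ := by
    rw [← ctr_sub]
    calc ‖ctr (μ := μ) T (F - Fk k)‖ ≤ 2 * ‖F - Fk k‖ := norm_ctr_le _
    _ < 2 * (δ / 2) := by linarith
    _ = δ := by ring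
  have hFknorm : ‖ctr (μ := μ) T (Fk k)‖ ≤ M + δ := by
    calc ‖ctr (μ := μ) T (Fk k)‖
        = ‖ctr (μ := μ) T F - (ctr T F - ctr T (Fk k))‖ := by rw [sub_sub_cancel]
    _ ≤ ‖ctr (μ := μ) T F‖ + ‖ctr (μ := μ) T F - ctr T (Fk k)‖ := norm_sub_le _ _
    _ ≤ M + δ := by rw [← hM]; linarith
  have h2 := (NormedAddCommGroup.tendsto_nhds_zero.1 (hk k)) (ε / 2) (by positivity)
  filter_upwards [h2] with n hn
  have hdecomp : ⟪ctr T F, (⇑(UU hT))^[n] (ctr T F)⟫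
      = ⟪ctr T (Fk k), (⇑(UU hT))^[n] (ctr T (Fk k))⟫
        + ⟪ctr T F - ctr T (Fk k), (⇑(UU hT))^[n] (ctr T F)⟫
        + ⟪ctr T (Fk k), (⇑(UU hT))^[n] (ctr T F) - (⇑(UU hT))^[n] (ctr T (Fk k))⟫ := by
    rw [inner_sub_left, inner_sub_right]
    ring
  have hb1 : ‖⟪ctr T F - ctr T (Fk k), (⇑(UU hT))^[n] (ctr T F)⟫‖ ≤ δ * M := by
    calc ‖⟪ctr T F - ctr T (Fk k), (⇑(UU hT))^[n] (ctr T F)⟫‖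
        ≤ ‖ctr (μ := μ) T F - ctr T (Fk k)‖ * ‖(⇑(UU hT))^[n] (ctr T F)‖ := norm_inner_le_norm _ _
    _ = ‖ctr (μ := μ) T F - ctr T (Fk k)‖ * M := by rw [myIter_norm]
    _ ≤ δ * M := mul_le_mul_of_nonneg_right (le_of_lt hd) hMnn
  have hb2 : ‖⟪ctr T (Fk k), (⇑(UU hT))^[n] (ctr T F) - (⇑(UU hT))^[n] (ctr T (Fk k))⟫‖
      ≤ (M + δ) * δ := by
    calc ‖⟪ctr T (Fk k), (⇑(UU hT))^[n] (ctr T F) - (⇑(UU hT))^[n] (ctr T (Fk k))⟫‖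
        ≤ ‖ctr (μ := μ) T (Fk k)‖ * ‖(⇑(UU hT))^[n] (ctr T F) - (⇑(UU hT))^[n] (ctr T (Fk k))‖ :=
          norm_inner_le_norm _ _
    _ = ‖ctr (μ := μ) T (Fk k)‖ * ‖ctr (μ := μ) T F - ctr T (Fk k)‖ := by
          rw [← myIter_map_sub, myIter_norm]
    _ ≤ (M + δ) * δ := by
          apply mul_le_mul hFknorm (le_of_lt hd) (norm_nonneg _)
          linarith
  have hδsmall : δ * M + (M + δ) * δ ≤ ε / 2 := by
    have hδ1 : δ ≤ 1 := min_le_left _ _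
    have hδ2 : δ ≤ ε / (2 * (2 * M + 1)) := min_le_right _ _
    have h1 : δ * M + (M + δ) * δ ≤ δ * (2 * M + 1) := by nlinarith
    have h3 : δ * (2 * M + 1) ≤ ε / 2 := by
      have h4 : 0 < 2 * M + 1 := by linarith
      calc δ * (2 * M + 1) ≤ ε / (2 * (2 * M + 1)) * (2 * M + 1) :=
            mul_le_mul_of_nonneg_right hδ2 (le_of_lt h4)
      _ = ε / 2 := by field_simp
    linarith
  calc ‖⟪ctr T F, (⇑(UU hT))^[n] (ctr T F)⟫‖
      ≤ ‖⟪ctr T (Fk k), (⇑(UU hT))^[n] (ctr T (Fk k))⟫‖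
        + ‖⟪ctr T F - ctr T (Fk k), (⇑(UU hT))^[n] (ctr T F)⟫‖
        + ‖⟪ctr T (Fk k), (⇑(UU hT))^[n] (ctr T F) - (⇑(UU hT))^[n] (ctr T (Fk k))⟫‖ := by
        rw [hdecomp]
        exact (norm_add_le _ _).trans (by gcongr; exact norm_add_le _ _)
  _ < ε / 2 + (δ * M + (M + δ) * δ) := by linarith
  _ ≤ ε := by linarith


lemma expCovInv_eq_inner {A : Set Ω} (hA : MeasurableSet A) (n : ℕ) :
    expCovInv μ T (A.indicator fun _ => (1:ℂ)) (A.indicator fun _ => (1:ℂ)) n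
      = ⟪ctr T (indicatorConstLp 2 hA (measure_ne_top μ A) (1:ℂ)),
          (⇑(UU hT))^[n] (ctr T (indicatorConstLp 2 hA (measure_ne_top μ A) (1:ℂ)))⟫ := by
  haveI : SigmaFinite (μ.trim (invSigma_le (T := T))) := inferInstance
  set FA : Lp ℂ 2 μ := indicatorConstLp 2 hA (measure_ne_top μ A) (1:ℂ) with hFA
  have hkey := key_identity hT FA FA n
  simp only [ctr]
  rw [← hkey]
  have h0 : ⇑FA =ᵐ[μ] A.indicator fun _ => (1:ℂ) := indicatorConstLp_coeFn
  have hI1 : ⟪FA, (⇑(UU hT))^[n] FA⟫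
      = ∫ x, (starRingEnd ℂ) (A.indicator (fun _ => (1:ℂ)) x)
          * (A.indicator (fun _ => (1:ℂ))) (T^[n] x) ∂μ := by
    rw [L2.inner_def]
    apply integral_congr_ae
    have h1 := coeFn_UU_iter hT FA n
    have h2 : (⇑FA ∘ T^[n]) =ᵐ[μ] ((A.indicator fun _ => (1:ℂ)) ∘ T^[n]) :=
      (hT.iterate n).quasiMeasurePreserving.ae_eq h0
    filter_upwards [h0, h1, h2] with x hx1 hx2 hx3
    rw [RCLike.inner_apply, hx2, hx1, mul_comm]
    exact congrArg _ hx3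
  have hcond : (μ[A.indicator (fun _ => (1:ℂ)) | invSigma T]) =ᵐ[μ]
      ⇑((condExpL2 ℂ ℂ (invSigma_le (T := T)) FA : lpMeas ℂ ℂ (invSigma T) 2 μ) : Lp ℂ 2 μ) := by
    have hint : Integrable (⇑FA) μ :=
      integrableOn_univ.1 (integrableOn_Lp_of_measure_ne_top FA
        fact_one_le_two_ennreal.elim (measure_ne_top μ _))
    have h1 : ⇑((condExpL2 ℂ ℂ (invSigma_le (T := T)) FA :
          lpMeas ℂ ℂ (invSigma T) 2 μ) : Lp ℂ 2 μ) =ᵐ[μ] μ[⇑FA | invSigma T] :=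
      ae_eq_condExp_of_forall_setIntegral_eq (invSigma_le (T := T)) hint
        (fun s _ hμs => integrableOn_condExpL2_of_measure_ne_top (invSigma_le (T := T)) hμs.ne FA)
        (fun s hs hμs => integral_condExpL2_eq (invSigma_le (T := T)) FA hs hμs.ne)
        (aestronglyMeasurable_condExpL2 (invSigma_le (T := T)) FA)
    exact (condExp_congr_ae h0.symm).trans h1.symm
  have hI2 : ⟪((condExpL2 ℂ ℂ (invSigma_le (T := T)) FA :
          lpMeas ℂ ℂ (invSigma T) 2 μ) : Lp ℂ 2 μ),
        ((condExpL2 ℂ ℂ (invSigma_le (T := T)) FA :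
          lpMeas ℂ ℂ (invSigma T) 2 μ) : Lp ℂ 2 μ)⟫
      = ∫ x, (starRingEnd ℂ) ((μ[A.indicator (fun _ => (1:ℂ)) | invSigma T]) x)
          * (μ[A.indicator (fun _ => (1:ℂ)) | invSigma T]) x ∂μ := by
    rw [L2.inner_def]
    apply integral_congr_ae
    filter_upwards [hcond] with x hx
    rw [RCLike.inner_apply, hx, mul_comm]
  rw [expCovInv, hI1, hI2]

lemma tendsto_expCovInv_iff_QProp {A : Set Ω} (hA : MeasurableSet A) :
    Tendsto (fun n : ℕ => expCovInv μ T (A.indicator fun _ => (1:ℂ))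
        (A.indicator fun _ => (1:ℂ)) n) atTop (𝓝 0)
      ↔ QProp hT (indicatorConstLp 2 hA (measure_ne_top μ A) (1:ℂ)) := by
  rw [QProp]
  constructor
  · intro h; exact h.congr fun n => expCovInv_eq_inner hT hA n
  · intro h; exact h.congr fun n => (expCovInv_eq_inner hT hA n).symm

lemma indicatorConstLp_diff' {A B : Set Ω} (hA : MeasurableSet A) (hB : MeasurableSet B)
    (hAB : A ⊆ B) :
    indicatorConstLp 2 (hB.diff hA) (measure_ne_top μ (B \ A)) (1:ℂ)
      = indicatorConstLp 2 hB (measure_ne_top μ B) (1:ℂ)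
        - indicatorConstLp 2 hA (measure_ne_top μ A) (1:ℂ) := by
  refine (Lp.ext ?_).symm
  have h0 := Lp.coeFn_sub (indicatorConstLp 2 hB (measure_ne_top μ B) (1:ℂ))
    (indicatorConstLp 2 hA (measure_ne_top μ A) (1:ℂ))
  filter_upwards [h0,
    indicatorConstLp_coeFn (μ := μ) (p := 2) (hs := hB.diff hA)
      (hμs := measure_ne_top μ (B \ A)) (c := (1:ℂ)),
    indicatorConstLp_coeFn (μ := μ) (p := 2) (hs := hB) (hμs := measure_ne_top μ B) (c := (1:ℂ)),
    indicatorConstLp_coeFn (μ := μ) (p := 2) (hs := hA)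
      (hμs := measure_ne_top μ A) (c := (1:ℂ))] with x h1 h2 h3 h4
  rw [h1, Pi.sub_apply, h2, h3, h4]
  by_cases hxA : x ∈ A
  · have hxB : x ∈ B := hAB hxA
    simp [Set.indicator_apply, Set.mem_diff, hxA, hxB]
  · by_cases hxB : x ∈ B
    · simp [Set.indicator_apply, Set.mem_diff, hxA, hxB]
    · simp [Set.indicator_apply, Set.mem_diff, hxA, hxB]

lemma tendsto_indicatorConstLp_iUnion {f : ℕ → Set Ω} (hf : ∀ k, MeasurableSet (f k))
    (hmono : ∀ k, f k ⊆ f (k + 1)) :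
    Tendsto (fun k => indicatorConstLp 2 (hf k) (measure_ne_top μ (f k)) (1:ℂ)) atTop
      (𝓝 (indicatorConstLp 2 (MeasurableSet.iUnion hf)
        (measure_ne_top μ (⋃ n, f n)) (1:ℂ))) := by
  have hmono' : Monotone f := monotone_nat_of_le_succ hmono
  rw [tendsto_iff_norm_sub_tendsto_zero]
  have hdiffeq : ∀ k, indicatorConstLp 2 (hf k) (measure_ne_top μ (f k)) (1:ℂ)
      - indicatorConstLp 2 (MeasurableSet.iUnion hf) (measure_ne_top μ (⋃ n, f n)) (1:ℂ)
      = - indicatorConstLp 2 ((MeasurableSet.iUnion hf).diff (hf k))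
          (measure_ne_top μ ((⋃ n, f n) \ f k)) (1:ℂ) := by
    intro k
    rw [indicatorConstLp_diff' (hf k) (MeasurableSet.iUnion hf) (Set.subset_iUnion f k)]
    abel
  have hnorm : ∀ k, ‖indicatorConstLp 2 (hf k) (measure_ne_top μ (f k)) (1:ℂ)
      - indicatorConstLp 2 (MeasurableSet.iUnion hf) (measure_ne_top μ (⋃ n, f n)) (1:ℂ)‖
      = (μ ((⋃ n, f n) \ f k)).toReal ^ ((1:ℝ)/2) := by
    intro k
    rw [hdiffeq k, norm_neg,
      norm_indicatorConstLp (by norm_num) (by norm_num)]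
    simp
    rfl
  have hμ0 : Tendsto (fun k => μ ((⋃ n, f n) \ f k)) atTop (𝓝 0) := by
    have hanti : Antitone fun k => (⋃ n, f n) \ f k :=
      fun i j hij => Set.diff_subset_diff_right (hmono' hij)
    have h0 : ⋂ k, ((⋃ n, f n) \ f k) = ∅ := by
      ext x
      simp only [Set.mem_iInter, Set.mem_diff, Set.mem_iUnion, Set.mem_empty_iff_false, iff_false]
      intro h
      obtain ⟨⟨m, hm⟩, -⟩ := h 0
      exact (h m).2 hm
    have ht := tendsto_measure_iInter_atTop (μ := μ)
      (fun k => ((MeasurableSet.iUnion hf).diff (hf k)).nullMeasurableSet) hanti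
      ⟨0, measure_ne_top μ _⟩
    rw [h0] at ht
    simpa [Function.comp_def] using ht
  have hreal : Tendsto (fun k => (μ ((⋃ n, f n) \ f k)).toReal) atTop (𝓝 0) := by
    have h := (ENNReal.tendsto_toReal (a := 0) (by simp)).comp hμ0
    simpa [Function.comp_def] using h
  have hrpow := hreal.rpow_const (p := (1:ℝ)/2) (Or.inr (by norm_num))
  rw [Real.zero_rpow (by norm_num)] at hrpow
  exact hrpow.congr fun k => (hnorm k).symm

end MT

/-- If every `A ∈ S` (a family of measurable sets) satisfies
`E(Cov_n(1_A,1_A|I)) → 0`, then so does every `A` in the Dynkin system generated by `S`. -/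
theorem expCovInv_indicator_tendsto_zero_of_dynkin
    {Ω : Type*} [MeasurableSpace Ω] (μ : Measure Ω) [IsProbabilityMeasure μ]
    (T : Ω → Ω) (hT : MeasurePreserving T μ μ)
    (S : Set (Set Ω)) (hSmeas : ∀ A ∈ S, MeasurableSet A)
    (hS : ∀ A ∈ S,
      Tendsto
        (fun n : ℕ =>
          expCovInv μ T (A.indicator fun _ => (1 : ℂ)) (A.indicator fun _ => (1 : ℂ)) n)
        atTop (𝓝 0)) :
    ∀ A : Set Ω, DynkinGen S A →
      Tendsto
        (fun n : ℕ =>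
          expCovInv μ T (A.indicator fun _ => (1 : ℂ)) (A.indicator fun _ => (1 : ℂ)) n)
        atTop (𝓝 0) := by
  suffices h : ∀ A : Set Ω, DynkinGen S A → MeasurableSet A ∧
      Tendsto (fun n : ℕ =>
        expCovInv μ T (A.indicator fun _ => (1 : ℂ)) (A.indicator fun _ => (1 : ℂ)) n)
        atTop (𝓝 0) by
    exact fun A hA => (h A hA).2
  intro A hA
  induction hA with
  | basic B hB => exact ⟨hSmeas B hB, hS B hB⟩
  | univ =>
    refine ⟨MeasurableSet.univ, ?_⟩
    rw [tendsto_expCovInv_iff_QProp hT MeasurableSet.univ]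
    have huniv : MeasurableSet[invSigma T] (Set.univ : Set Ω) := ⟨MeasurableSet.univ, by simp⟩
    have hmem : indicatorConstLp 2 MeasurableSet.univ (measure_ne_top μ Set.univ) (1:ℂ)
        ∈ lpMeas ℂ ℂ (invSigma T) 2 μ :=
      mem_lpMeas_indicatorConstLp (invSigma_le (T := T)) huniv (measure_ne_top μ _)
    have hc : ctr (μ := μ) T
        (indicatorConstLp 2 MeasurableSet.univ (measure_ne_top μ Set.univ) (1:ℂ)) = 0 := by
      rw [ctr, condexpL2_of_mem hmem, sub_self]
    rw [QProp, hc]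
    simpa using tendsto_const_nhds
  | diff A B hA hB hsub ihA ihB =>
    obtain ⟨hAm, hAt⟩ := ihA
    obtain ⟨hBm, hBt⟩ := ihB
    refine ⟨hBm.diff hAm, ?_⟩
    rw [tendsto_expCovInv_iff_QProp hT (hBm.diff hAm)]
    rw [tendsto_expCovInv_iff_QProp hT hAm] at hAt
    rw [tendsto_expCovInv_iff_QProp hT hBm] at hBt
    rw [indicatorConstLp_diff' hAm hBm hsub]
    exact QProp_sub hT hBt hAt
  | iUnion_mono f hmono hf ih =>
    have hms : ∀ k, MeasurableSet (f k) := fun k => (ih k).1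
    refine ⟨MeasurableSet.iUnion hms, ?_⟩
    rw [tendsto_expCovInv_iff_QProp hT (MeasurableSet.iUnion hms)]
    refine QProp_lim hT (tendsto_indicatorConstLp_iUnion hms hmono) fun k => ?_
    exact (tendsto_expCovInv_iff_QProp hT (hms k)).1 (ih k).2

end
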